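/- arXiv:2004.12721 — 3 statements merged into one kernel-verified Lean document; each statement's English description precedes it below -/
import Mathlib

section
/- Let V₁, P, Q, V₂ be four distinct collinear points of ℝ², with P in the open segment from V₁ to Q and Q in the open segment from P to V₂, and let F : [0,∞)×[0,∞) → ℝ satisfy conditions (i)–(iv): (i) F is symmetric and C^∞; (ii) ∂F/∂b is nonzero at (dist(P,V₁), dist(P,V₂)) and at (dist(Q,V₁), dist(Q,V₂)); (iii) ∂F/∂a is nonzero at these same two points; (iv) for every natural number n, ((∂F/∂a at (dist(Q,V₁),dist(Q,V₂)) · ∂F/∂b at (dist(P,V₁),dist(P,V₂))) / (∂F/∂a at (dist(P,V₁),dist(P,V₂)) · ∂F/∂b at (dist(Q,V₁),dist(Q,V₂))))^n ≠ (dist(V₂,Q)·dist(V₁,P))/(dist(V₂,P)·dist(V₁,Q)). If K is an analytic solution of the interior F-chordal problem with interior F-chordal points P, Q and vertices V₁, V₂, then for every analytic map γ : (−ε,ε) → ℝ² with γ(0) = V₁, γ′(0) ≠ 0 and image a relatively open neighbourhood of V₁ in c = frontier K, the tangent vector γ′(0) is perpendicular to the vector V₂ − V₁ (the tangent line of c at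 each vertex is perpendicular to the axis). -/
open Set

noncomputable section

/-- The Euclidean plane. -/
abbrev Plane := EuclideanSpace ℝ (Fin 2)

/-- `P` is an interior `F`-chordal point of the curve `c`. -/
def IsChordalPoint (F : ℝ → ℝ → ℝ) (c : Set Plane) (P : Plane) : Prop :=
  ∃ k : ℝ, ∀ A B : Plane, A ∈ c → B ∈ c → P ∈ openSegment ℝ A B →
    F (dist A P) (dist B P) = k

/-- `c` is analytic: every point of `c` has a regular analytic local parametrization
whose image is a relatively open neighbourhood of the point in `c`. -/
def IsAnalyticBoundary (c : Set Plane) : Prop :=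
  ∀ p ∈ c, ∃ ε : ℝ, 0 < ε ∧ ∃ γ : ℝ → Plane,
    AnalyticOnNhd ℝ γ (Ioo (-ε) ε) ∧ γ 0 = p ∧ deriv γ 0 ≠ 0 ∧
    ∃ U : Set Plane, IsOpen U ∧ p ∈ U ∧ γ '' Ioo (-ε) ε = c ∩ U

/-- `K` is an analytic solution of the interior `F`-chordal problem with interior
`F`-chordal points `P, Q` and vertices `V₁, V₂`. -/
def IsAnalyticSolution (F : ℝ → ℝ → ℝ) (P Q V₁ V₂ : Plane) (K : Set Plane) : Prop :=
  IsCompact K ∧ Convex ℝ K ∧ (interior K).Nonempty ∧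
  P ∈ interior K ∧ Q ∈ interior K ∧
  IsChordalPoint F (frontier K) P ∧ IsChordalPoint F (frontier K) Q ∧
  (affineSpan ℝ ({P, Q} : Set Plane) : Set Plane) ∩ frontier K = {V₁, V₂} ∧
  IsAnalyticBoundary (frontier K)

/-- Partial derivative of `F` with respect to the first variable. -/
def Fa (F : ℝ → ℝ → ℝ) (x y : ℝ) : ℝ := deriv (fun a => F a y) x

/-- Partial derivative of `F` with respect to the second variable. -/
def Fb (F : ℝ → ℝ → ℝ) (x y : ℝ) : ℝ := deriv (fun b => F x b) y

namespace ChordalAux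


/-- planar cross product -/
def om (u v : Plane) : ℝ := u 0 * v 1 - u 1 * v 0

lemma om_neg_left (u v : Plane) : om (-u) v = -om u v := by
  simp [om]; ring

lemma om_smul_left (a : ℝ) (u v : Plane) : om (a • u) v = a * om u v := by
  simp [om, PiLp.smul_apply, smul_eq_mul]; ring

lemma om_smul_right (a : ℝ) (u v : Plane) : om u (a • v) = a * om u v := by
  simp [om, PiLp.smul_apply, smul_eq_mul]; ring

lemma om_self (u : Plane) : om u u = 0 := by simp [om]; ring

lemma exists_smul_of_om_eq_zero {D w : Plane} (h : om D w = 0) (hD : D ≠ 0) :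
    ∃ lam : ℝ, w = lam • D := by
  have hD' : D 0 ≠ 0 ∨ D 1 ≠ 0 := by
    by_contra hcon
    push_neg at hcon
    apply hD
    ext i
    fin_cases i <;> simp [hcon.1, hcon.2]
  simp only [om, sub_eq_zero] at h
  rcases hD' with h0 | h1
  · refine ⟨w 0 / D 0, ?_⟩
    ext i
    fin_cases i
    · simp [PiLp.smul_apply, smul_eq_mul]; field_simp
    · simp only [PiLp.smul_apply, smul_eq_mul]
      field_simp
      simp only [Fin.mk_one, Fin.zero_eta] at *
      linear_combination h
  · refine ⟨w 1 / D 1, ?_⟩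
    ext i
    fin_cases i
    · simp only [PiLp.smul_apply, smul_eq_mul]
      field_simp
      simp only [Fin.mk_one, Fin.zero_eta] at *
      linear_combination -h
    · simp [PiLp.smul_apply, smul_eq_mul]; field_simp

lemma mem_openSegment_of_om_inner {A B R : Plane} (hom : om (A - R) (B - R) = 0)
    (hinner : (inner ℝ (A - R) (B - R) : ℝ) < 0) : R ∈ openSegment ℝ A B := by
  have hA : A - R ≠ 0 := by
    intro h
    rw [h] at hinner
    simp at hinner
  obtain ⟨μ, hμ⟩ := exists_smul_of_om_eq_zero hom hA
  have hAR : (0:ℝ) < inner ℝ (A - R) (A - R) := by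
    have h3 : 0 < ‖A - R‖ := norm_pos_iff.2 hA
    rw [real_inner_self_eq_norm_sq]
    positivity
  have hμneg : μ < 0 := by
    have h2 : (inner ℝ (A - R) (B - R) : ℝ) = μ * inner ℝ (A - R) (A - R) := by
      rw [hμ, real_inner_smul_right]
    nlinarith
  have h1μ : (0:ℝ) < 1 - μ := by linarith
  refine ⟨-μ / (1 - μ), 1 / (1 - μ), div_pos (by linarith) h1μ, by positivity, ?_, ?_⟩
  · field_simp
    ring
  · have hB : B = μ • A - μ • R + R := by
      have : B - R = μ • A - μ • R := by rw [hμ, smul_sub]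
      linear_combination (norm := module) this
    rw [hB]
    match_scalars <;> (field_simp; try ring)


lemma hasDerivAt_norm_comp {f : ℝ → Plane} {v : Plane} {t : ℝ}
    (hf : HasDerivAt f v t) (hne : f t ≠ 0) :
    HasDerivAt (fun s => ‖f s‖) ((inner ℝ v (f t) : ℝ) / ‖f t‖) t := by
  have hq : HasDerivAt (fun s => (inner ℝ (f s) (f s) : ℝ)) (2 * (inner ℝ v (f t) : ℝ)) t := by
    have h := hf.inner ℝ hf
    have : (inner ℝ (f t) v : ℝ) + (inner ℝ v (f t) : ℝ) = 2 * (inner ℝ v (f t) : ℝ) := by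
      rw [real_inner_comm]; ring
    rwa [this] at h
  have hpos : (0:ℝ) < (inner ℝ (f t) (f t) : ℝ) := by
    have h3 : 0 < ‖f t‖ := norm_pos_iff.2 hne
    rw [real_inner_self_eq_norm_sq]; positivity
  have hsq := (Real.hasDerivAt_sqrt (ne_of_gt hpos)).comp t hq
  have heq : (fun s => Real.sqrt (inner ℝ (f s) (f s) : ℝ)) = fun s => ‖f s‖ := by
    funext s; rw [real_inner_self_eq_norm_mul_norm, Real.sqrt_mul_self (norm_nonneg _)]
  rw [Function.comp_def] at hsq
  rw [heq] at hsq
  refine hsq.congr_deriv ?_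
  have h4 : Real.sqrt (inner ℝ (f t) (f t) : ℝ) = ‖f t‖ := by
    rw [real_inner_self_eq_norm_mul_norm, Real.sqrt_mul_self (norm_nonneg _)]
  rw [h4]
  have h5 : ‖f t‖ ≠ 0 := norm_ne_zero_iff.2 hne
  field_simp

lemma hasStrictDerivAt_of_analyticAt {f : ℝ → Plane} {t : ℝ} (hf : AnalyticAt ℝ f t) :
    HasStrictDerivAt f (deriv f t) t := by
  have h := hf.hasStrictFDerivAt.hasStrictDerivAt
  rwa [fderiv_apply_one_eq_deriv] at h
set_option maxHeartbeats 2000000 in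
lemma chord_equation
    (K : Set Plane) (V₁ V₂ R : Plane) (α β : ℝ) (hα : 0 < α) (hβ : 0 < β) (hab : α + β = 1)
    (hRdef : R = α • V₁ + β • V₂) (hV : V₁ ≠ V₂)
    (hV₁K : V₁ ∈ frontier K) (hV₂K : V₂ ∈ frontier K)
    (F : ℝ → ℝ → ℝ) (L2 : ℝ × ℝ →L[ℝ] ℝ)
    (hF : HasFDerivAt (fun p : ℝ × ℝ => F p.1 p.2) L2 (‖V₁ - R‖, ‖V₂ - R‖))
    (hch : IsChordalPoint F (frontier K) R)
    (ε₁ ε₂ : ℝ) (hε₁ : 0 < ε₁) (hε₂ : 0 < ε₂)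
    (γ δ : ℝ → Plane)
    (hγa : AnalyticOnNhd ℝ γ (Ioo (-ε₁) ε₁)) (hγ0 : γ 0 = V₁)
    (hγfr : ∀ t ∈ Ioo (-ε₁) ε₁, γ t ∈ frontier K)
    (hδa : AnalyticOnNhd ℝ δ (Ioo (-ε₂) ε₂)) (hδ0 : δ 0 = V₂)
    (hδfr : ∀ t ∈ Ioo (-ε₂) ε₂, δ t ∈ frontier K)
    (hω : om (V₂ - V₁) (deriv δ 0) ≠ 0) :
    β * om (V₂ - V₁) (deriv δ 0) * L2 (1, 0) * (inner ℝ (deriv γ 0) (V₂ - V₁) : ℝ)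
      = α * om (deriv γ 0) (V₂ - V₁) * (inner ℝ (deriv δ 0) (V₂ - V₁) : ℝ) * L2 (0, 1) := by
  set D : Plane := V₂ - V₁ with hD
  set u : Plane := deriv γ 0 with hu'
  set w : Plane := deriv δ 0 with hw'
  have h0mem1 : (0:ℝ) ∈ Ioo (-ε₁) ε₁ := ⟨by linarith, hε₁⟩
  have h0mem2 : (0:ℝ) ∈ Ioo (-ε₂) ε₂ := ⟨by linarith, hε₂⟩
  have hu : HasStrictDerivAt γ u 0 := hasStrictDerivAt_of_analyticAt (hγa 0 h0mem1)
  have hw : HasStrictDerivAt δ w 0 := hasStrictDerivAt_of_analyticAt (hδa 0 h0mem2)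
  have hV₁R : V₁ - R = -(β • D) := by
    rw [hRdef, hD]; match_scalars <;> linarith
  have hV₂R : V₂ - R = α • D := by
    rw [hRdef, hD]; match_scalars <;> linarith
  have hDne : D ≠ 0 := sub_ne_zero.2 (Ne.symm hV)
  have hnD : (0:ℝ) < ‖D‖ := norm_pos_iff.2 hDne
  have hn1 : ‖V₁ - R‖ = β * ‖D‖ := by rw [hV₁R, norm_neg, norm_smul, Real.norm_of_nonneg hβ.le]
  have hn2 : ‖V₂ - R‖ = α * ‖D‖ := by rw [hV₂R, norm_smul, Real.norm_of_nonneg hα.le]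
  have hV₁Rne : V₁ - R ≠ 0 := by
    rw [hV₁R]; simp [neg_eq_zero, smul_eq_zero, hβ.ne', hDne]
  have hV₂Rne : V₂ - R ≠ 0 := by
    rw [hV₂R]; simp [smul_eq_zero, hα.ne', hDne]
  -- the implicit collinearity function
  set G : ℝ × ℝ → ℝ := fun p => om (γ p.1 - R) (δ p.2 - R) with hGdef
  -- strict derivative of G
  have hγfd : HasStrictFDerivAt γ (fderiv ℝ γ 0) 0 := (hγa 0 h0mem1).hasStrictFDerivAt
  have hδfd : HasStrictFDerivAt δ (fderiv ℝ δ 0) 0 := (hδa 0 h0mem2).hasStrictFDerivAt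
  have hfst : HasStrictFDerivAt (Prod.fst : ℝ × ℝ → ℝ)
      (ContinuousLinearMap.fst ℝ ℝ ℝ) ((0:ℝ), (0:ℝ)) := hasStrictFDerivAt_fst
  have hsnd : HasStrictFDerivAt (Prod.snd : ℝ × ℝ → ℝ)
      (ContinuousLinearMap.snd ℝ ℝ ℝ) ((0:ℝ), (0:ℝ)) := hasStrictFDerivAt_snd
  have hγc : HasStrictFDerivAt (fun p : ℝ × ℝ => γ p.1)
      ((fderiv ℝ γ 0).comp (ContinuousLinearMap.fst ℝ ℝ ℝ)) ((0:ℝ), (0:ℝ)) :=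
    hγfd.comp ((0:ℝ), (0:ℝ)) hfst
  have hδc : HasStrictFDerivAt (fun p : ℝ × ℝ => δ p.2)
      ((fderiv ℝ δ 0).comp (ContinuousLinearMap.snd ℝ ℝ ℝ)) ((0:ℝ), (0:ℝ)) :=
    hδfd.comp ((0:ℝ), (0:ℝ)) hsnd
  have hA : ∀ i : Fin 2, HasStrictFDerivAt (fun p : ℝ × ℝ => (γ p.1) i - R i)
      ((EuclideanSpace.proj i).comp ((fderiv ℝ γ 0).comp (ContinuousLinearMap.fst ℝ ℝ ℝ)))
      ((0:ℝ), (0:ℝ)) := fun i =>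
    (((EuclideanSpace.proj i).hasStrictFDerivAt).comp ((0:ℝ), (0:ℝ)) hγc).sub_const (R i)
  have hB : ∀ i : Fin 2, HasStrictFDerivAt (fun p : ℝ × ℝ => (δ p.2) i - R i)
      ((EuclideanSpace.proj i).comp ((fderiv ℝ δ 0).comp (ContinuousLinearMap.snd ℝ ℝ ℝ)))
      ((0:ℝ), (0:ℝ)) := fun i =>
    (((EuclideanSpace.proj i).hasStrictFDerivAt).comp ((0:ℝ), (0:ℝ)) hδc).sub_const (R i)
  have hGs0 := (((hA 0).mul (hB 1)).sub ((hA 1).mul (hB 0)))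
  have hGs : HasStrictFDerivAt G _ ((0:ℝ), (0:ℝ)) :=
    hGs0.congr_of_eventuallyEq (Filter.Eventually.of_forall fun p => by
      simp [hGdef, om])
  have hfd_eq := hGs.hasFDerivAt.fderiv
  set LG := fderiv ℝ G ((0:ℝ), (0:ℝ)) with hLGdef
  have hc1 : LG ((1:ℝ), (0:ℝ)) = om u (V₂ - R) := by
    rw [hfd_eq]
    simp [om, hγ0, hδ0, fderiv_apply_one_eq_deriv, ← hu', ← hw']
    try ring
  have hd1 : LG ((0:ℝ), (1:ℝ)) = om (V₁ - R) w := by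
    rw [hfd_eq]
    simp [om, hγ0, hδ0, fderiv_apply_one_eq_deriv, ← hu', ← hw']
    try ring
  have hlin : ∀ p : ℝ × ℝ, LG p = p.1 * om u (V₂ - R) + p.2 * om (V₁ - R) w := by
    intro p
    have hp : p = p.1 • ((1:ℝ), (0:ℝ)) + p.2 • ((0:ℝ), (1:ℝ)) := by
      ext <;> simp
    conv_lhs => rw [hp]
    rw [map_add, map_smul, map_smul, hc1, hd1, smul_eq_mul, smul_eq_mul]
  have hd0 : om (V₁ - R) w ≠ 0 := by
    rw [hV₁R, om_neg_left, om_smul_left]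
    simp only [neg_ne_zero]
    exact mul_ne_zero hβ.ne' hω
  -- the local diffeomorphism (t, s) ↦ (t, G (t,s))
  set c : ℝ := om u (V₂ - R) with hcdef
  set d : ℝ := om (V₁ - R) w with hddef
  set Φ' : ℝ × ℝ →L[ℝ] ℝ × ℝ := (ContinuousLinearMap.fst ℝ ℝ ℝ).prod LG with hΦ'def
  set Ψ' : ℝ × ℝ →L[ℝ] ℝ × ℝ := (ContinuousLinearMap.fst ℝ ℝ ℝ).prod
      (d⁻¹ • (ContinuousLinearMap.snd ℝ ℝ ℝ - c • ContinuousLinearMap.fst ℝ ℝ ℝ)) with hΨ'def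
  have hleft : Function.LeftInverse Ψ' Φ' := by
    intro p
    have := hlin p
    ext
    · simp [hΦ'def, hΨ'def]
    · simp [hΦ'def, hΨ'def, this]
      field_simp
      ring
  have hright : Function.RightInverse Ψ' Φ' := by
    intro q
    have := hlin ((q.1, d⁻¹ * (q.2 - c * q.1)))
    ext
    · simp [hΦ'def, hΨ'def]
    · simp only [hΦ'def, hΨ'def, ContinuousLinearMap.prod_apply,
        ContinuousLinearMap.coe_fst', ContinuousLinearMap.smul_apply,
        ContinuousLinearMap.sub_apply, ContinuousLinearMap.coe_snd',
        smul_eq_mul]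
      rw [show ((q.1, d⁻¹ * (q.2 - c * q.1)) : ℝ × ℝ) =
        ((q.1, d⁻¹ * (q.2 - c * q.1)) : ℝ × ℝ) from rfl] at this
      calc LG (q.1, d⁻¹ * (q.2 - c * q.1)) = q.1 * c + d⁻¹ * (q.2 - c * q.1) * d := this
      _ = q.2 := by field_simp; ring
  set e : (ℝ × ℝ) ≃L[ℝ] (ℝ × ℝ) := ContinuousLinearEquiv.equivOfInverse Φ' Ψ' hleft hright
    with hedef
  set Φ : ℝ × ℝ → ℝ × ℝ := fun p => (p.1, G p) with hΦdef
  have hΦs : HasStrictFDerivAt Φ (e : (ℝ × ℝ) →L[ℝ] (ℝ × ℝ)) ((0:ℝ), (0:ℝ)) := by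
    have h := hfst.prodMk hGs
    rw [← hfd_eq] at h
    have hcoe : (e : (ℝ × ℝ) →L[ℝ] (ℝ × ℝ)) = Φ' := rfl
    rw [hcoe, hΦ'def]
    exact h
  have hG00 : G ((0:ℝ), (0:ℝ)) = 0 := by
    show om (γ 0 - R) (δ 0 - R) = 0
    rw [hγ0, hδ0, hV₁R, hV₂R, om_neg_left, om_smul_left, om_smul_right, om_self]
    ring
  have hΦ00 : Φ ((0:ℝ), (0:ℝ)) = ((0:ℝ), (0:ℝ)) := by
    show ((0:ℝ), G ((0:ℝ), (0:ℝ))) = ((0:ℝ), (0:ℝ))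
    rw [hG00]
  set Ψ : ℝ × ℝ → ℝ × ℝ := hΦs.localInverse Φ e ((0:ℝ), (0:ℝ)) with hΨdef
  have hΨ0 : Ψ ((0:ℝ), (0:ℝ)) = ((0:ℝ), (0:ℝ)) := by
    have h := hΦs.localInverse_apply_image
    rwa [hΦ00] at h
  have hΨs : HasStrictFDerivAt Ψ (e.symm : (ℝ × ℝ) →L[ℝ] (ℝ × ℝ)) ((0:ℝ), (0:ℝ)) := by
    have h := hΦs.to_localInverse
    rwa [hΦ00] at h
  set s : ℝ → ℝ := fun t => (Ψ (t, 0)).2 with hsdef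
  have hs0 : s 0 = 0 := by
    show (Ψ ((0:ℝ), (0:ℝ))).2 = 0
    rw [hΨ0]
  set σ : ℝ := (e.symm ((1:ℝ), (0:ℝ))).2 with hσdef
  have hσval : σ = d⁻¹ * (0 - c * 1) := by
    rw [hσdef, hedef, ContinuousLinearEquiv.symm_equivOfInverse]
    simp [hΨ'def]
  have hs : HasDerivAt s σ 0 := by
    have h1 : HasDerivAt (fun t : ℝ => ((t, (0:ℝ)) : ℝ × ℝ)) ((1:ℝ), (0:ℝ)) 0 :=
      (hasDerivAt_id 0).prodMk (hasDerivAt_const 0 0)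
    have h2 : HasDerivAt (fun t : ℝ => Ψ (t, 0)) (e.symm ((1:ℝ), (0:ℝ))) 0 :=
      hΨs.hasFDerivAt.comp_hasDerivAt_of_eq 0 h1 rfl
    have h3 : HasDerivAt (fun t : ℝ => (Ψ (t, 0)).2) ((e.symm ((1:ℝ), (0:ℝ))).2) 0 :=
      ((ContinuousLinearMap.snd ℝ ℝ ℝ).hasFDerivAt).comp_hasDerivAt_of_eq 0 h2 rfl
    exact h3
  have hscont : ContinuousAt s 0 := hs.continuousAt
  -- eventually the implicit equation holds
  have hrinv : ∀ᶠ y in nhds (((0:ℝ), (0:ℝ)) : ℝ × ℝ), Φ (Ψ y) = y := by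
    have h := hΦs.eventually_right_inverse
    rwa [hΦ00] at h
  have htend : Filter.Tendsto (fun t : ℝ => ((t, (0:ℝ)) : ℝ × ℝ)) (nhds 0)
      (nhds (((0:ℝ), (0:ℝ)) : ℝ × ℝ)) := by
    exact (continuous_id.prodMk continuous_const).tendsto' 0 _ rfl
  have hevG : ∀ᶠ t in nhds (0:ℝ), om (γ t - R) (δ (s t) - R) = 0 := by
    refine (htend.eventually hrinv).mono fun t h => ?_
    have h1 : (Ψ (t, 0)).1 = t := congrArg Prod.fst h
    have h2 : G (Ψ (t, 0)) = 0 := congrArg Prod.snd h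
    have h3 : G (Ψ (t, 0)) = om (γ ((Ψ (t, 0)).1) - R) (δ ((Ψ (t, 0)).2) - R) := rfl
    rw [h3, h1] at h2
    exact h2
  have hevIoo1 : ∀ᶠ t in nhds (0:ℝ), t ∈ Ioo (-ε₁) ε₁ :=
    isOpen_Ioo.eventually_mem h0mem1
  have hevIoo2 : ∀ᶠ t in nhds (0:ℝ), s t ∈ Ioo (-ε₂) ε₂ := by
    have h : Filter.Tendsto s (nhds 0) (nhds 0) := by
      have := hscont.tendsto
      rwa [hs0] at this
    exact h.eventually (isOpen_Ioo.eventually_mem h0mem2)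
  have hγcont : ContinuousAt γ 0 := hu.hasDerivAt.continuousAt
  have hδscont : ContinuousAt (fun t => δ (s t)) 0 := by
    have hδcont : ContinuousAt δ (s 0) := by rw [hs0]; exact hw.hasDerivAt.continuousAt
    exact hδcont.comp hscont
  have hevInner : ∀ᶠ t in nhds (0:ℝ), (inner ℝ (γ t - R) (δ (s t) - R) : ℝ) < 0 := by
    have hcont : ContinuousAt (fun t => (inner ℝ (γ t - R) (δ (s t) - R) : ℝ)) 0 :=
      (hγcont.sub continuousAt_const).inner (hδscont.sub continuousAt_const)
    have hval : (inner ℝ (γ 0 - R) (δ (s 0) - R) : ℝ) < 0 := by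
      rw [hγ0, hs0, hδ0, hV₁R, hV₂R]
      rw [inner_neg_left, real_inner_smul_left, real_inner_smul_right]
      have : (0:ℝ) < (inner ℝ D D : ℝ) := by
        have h3 : 0 < ‖D‖ := hnD
        rw [real_inner_self_eq_norm_sq]; positivity
      have : 0 < β * (α * (inner ℝ D D : ℝ)) := by positivity
      linarith
    exact hcont.tendsto.eventually_lt_const hval
  obtain ⟨k, hk⟩ := hch
  have hkV : F ‖V₁ - R‖ ‖V₂ - R‖ = k := by
    have hmem : R ∈ openSegment ℝ V₁ V₂ := ⟨α, β, hα, hβ, hab, hRdef.symm⟩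
    have := hk V₁ V₂ hV₁K hV₂K hmem
    simpa [dist_eq_norm] using this
  have hevF : ∀ᶠ t in nhds (0:ℝ), F ‖γ t - R‖ ‖δ (s t) - R‖ = k := by
    filter_upwards [hevG, hevIoo1, hevIoo2, hevInner] with t hG2 h1 h2 h3
    have hAfr : γ t ∈ frontier K := hγfr t h1
    have hBfr : δ (s t) ∈ frontier K := hδfr (s t) h2
    have hseg : R ∈ openSegment ℝ (γ t) (δ (s t)) :=
      mem_openSegment_of_om_inner hG2 h3
    have := hk (γ t) (δ (s t)) hAfr hBfr hseg
    simpa [dist_eq_norm] using this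
  -- derivatives of the two radius functions
  have hγsub : HasDerivAt (fun t => γ t - R) u 0 := hu.hasDerivAt.sub_const R
  have hγsubne : γ 0 - R ≠ 0 := by rw [hγ0]; exact hV₁Rne
  have hr₁ : HasDerivAt (fun t => ‖γ t - R‖) ((inner ℝ u (V₁ - R) : ℝ) / ‖V₁ - R‖) 0 := by
    have h := hasDerivAt_norm_comp hγsub hγsubne
    rwa [hγ0] at h
  have hδs' : HasDerivAt (fun t => δ (s t)) (σ • w) 0 := by
    have hδd : HasDerivAt δ w (s 0) := by rw [hs0]; exact hw.hasDerivAt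
    exact hδd.scomp 0 hs
  have hδsub : HasDerivAt (fun t => δ (s t) - R) (σ • w) 0 := hδs'.sub_const R
  have hδsubne : δ (s 0) - R ≠ 0 := by rw [hs0, hδ0]; exact hV₂Rne
  have hr₂ : HasDerivAt (fun t => ‖δ (s t) - R‖)
      ((inner ℝ (σ • w) (V₂ - R) : ℝ) / ‖V₂ - R‖) 0 := by
    have h := hasDerivAt_norm_comp hδsub hδsubne
    rwa [hs0, hδ0] at h
  have hpair : HasDerivAt (fun t => ((‖γ t - R‖, ‖δ (s t) - R‖) : ℝ × ℝ))
      (((inner ℝ u (V₁ - R) : ℝ) / ‖V₁ - R‖, (inner ℝ (σ • w) (V₂ - R) : ℝ) / ‖V₂ - R‖) : ℝ × ℝ)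
      0 := hr₁.prodMk hr₂
  have hgd : HasDerivAt (fun t => F ‖γ t - R‖ ‖δ (s t) - R‖)
      (L2 (((inner ℝ u (V₁ - R) : ℝ) / ‖V₁ - R‖,
        (inner ℝ (σ • w) (V₂ - R) : ℝ) / ‖V₂ - R‖) : ℝ × ℝ)) 0 :=
    hF.comp_hasDerivAt_of_eq 0 hpair (by rw [hγ0, hs0, hδ0])
  have hconst : HasDerivAt (fun t => F ‖γ t - R‖ ‖δ (s t) - R‖) 0 0 := by
    refine (hasDerivAt_const (0:ℝ) k).congr_of_eventuallyEq ?_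
    exact hevF
  have hzero := hgd.unique hconst
  -- expand the linear map on the pair
  have hdec : ∀ a b : ℝ, L2 ((a, b) : ℝ × ℝ) = a * L2 ((1:ℝ), (0:ℝ)) + b * L2 ((0:ℝ), (1:ℝ)) := by
    intro a b
    have hp : ((a, b) : ℝ × ℝ) = a • ((1:ℝ), (0:ℝ)) + b • ((0:ℝ), (1:ℝ)) := by
      ext <;> simp
    rw [hp, map_add, map_smul, map_smul, smul_eq_mul, smul_eq_mul]
  rw [hdec] at hzero
  -- substitute all the geometric values
  set X : ℝ := (inner ℝ u D : ℝ) with hXdef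
  set W : ℝ := (inner ℝ w D : ℝ) with hWdef
  have hi1 : (inner ℝ u (V₁ - R) : ℝ) = -(β * X) := by
    rw [hXdef, hV₁R, inner_neg_right, real_inner_smul_right]
  have hi2 : (inner ℝ (σ • w) (V₂ - R) : ℝ) = σ * (α * W) := by
    rw [hWdef, hV₂R, real_inner_smul_left, real_inner_smul_right]
  have hcval : c = α * om u D := by rw [hcdef, hV₂R, om_smul_right]
  have hdval : d = -(β * om D w) := by rw [hddef, hV₁R, om_neg_left, om_smul_left]
  rw [hi1, hi2, hn1, hn2] at hzero
  rw [hσval, hcval, hdval] at hzero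
  have hωD : om D w ≠ 0 := hω
  have hβne : β ≠ 0 := hβ.ne'
  have hαne : α ≠ 0 := hα.ne'
  have hnDne : ‖D‖ ≠ 0 := hnD.ne'
  field_simp at hzero
  -- final goal
  show β * om D w * L2 ((1:ℝ), (0:ℝ)) * X = α * om u D * W * L2 ((0:ℝ), (1:ℝ))
  have hmul : (α * β * ‖D‖) * (β * om D w * L2 ((1:ℝ), (0:ℝ)) * X)
      = (α * β * ‖D‖) * (α * om u D * W * L2 ((0:ℝ), (1:ℝ))) := by
    linear_combination (-(α * β * ‖D‖)) * hzero
  exact mul_left_cancel₀ (by positivity) hmul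
lemma om_tangent_ne_zero
    (K : Set Plane) (hKcl : IsClosed K) (hKconv : Convex ℝ K)
    (V₁ V₂ R : Plane) (α β : ℝ) (hα : 0 < α) (hβ : 0 < β) (hab : α + β = 1)
    (hRdef : R = α • V₁ + β • V₂) (hV : V₁ ≠ V₂)
    (hRint : R ∈ interior K) (hV₂K : V₂ ∈ frontier K)
    (ε₂ : ℝ) (hε₂ : 0 < ε₂) (δ : ℝ → Plane)
    (hδa : AnalyticOnNhd ℝ δ (Ioo (-ε₂) ε₂)) (hδ0 : δ 0 = V₂) (hδ' : deriv δ 0 ≠ 0)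
    (hδfr : ∀ t ∈ Ioo (-ε₂) ε₂, δ t ∈ frontier K) :
    om (V₂ - V₁) (deriv δ 0) ≠ 0 := by
  intro hcon
  set D : Plane := V₂ - V₁ with hD
  set w : Plane := deriv δ 0 with hw'
  have h0mem2 : (0:ℝ) ∈ Ioo (-ε₂) ε₂ := ⟨by linarith, hε₂⟩
  have hDne : D ≠ 0 := sub_ne_zero.2 (Ne.symm hV)
  obtain ⟨lam, hlam⟩ := exists_smul_of_om_eq_zero hcon hDne
  have hlamne : lam ≠ 0 := by
    intro h; rw [h, zero_smul] at hlam; exact hδ' hlam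
  have hV₂notint : V₂ ∉ interior K := hV₂K.2
  obtain ⟨f, hf⟩ := geometric_hahn_banach_open_point hKconv.interior isOpen_interior hV₂notint
  have hKle : ∀ x ∈ K, f x ≤ f V₂ := by
    intro x hx
    have htend : Filter.Tendsto (fun t : ℝ => f (x + t • (R - x)))
        (nhdsWithin 0 (Ioi 0)) (nhds (f x)) := by
      have hcont : Continuous fun t : ℝ => f (x + t • (R - x)) := by
        exact f.continuous.comp (continuous_const.add (continuous_id.smul continuous_const))
      have h0 : (fun t : ℝ => f (x + t • (R - x))) 0 = f x := by simp
      exact ((hcont.tendsto' 0 _ h0)).mono_left nhdsWithin_le_nhds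
    refine le_of_tendsto htend ?_
    have hIoc : Ioc (0:ℝ) 1 ∈ nhdsWithin 0 (Ioi 0) :=
      Ioc_mem_nhdsGT_of_mem (by constructor <;> norm_num)
    filter_upwards [hIoc] with t ht
    exact le_of_lt (hf _ (hKconv.add_smul_sub_mem_interior hx hRint ht))
  have hδd : HasDerivAt δ w 0 := (hasStrictDerivAt_of_analyticAt (hδa 0 h0mem2)).hasDerivAt
  have hd : HasDerivAt (fun t => f (δ t)) (f w) 0 :=
    f.hasFDerivAt.comp_hasDerivAt_of_eq 0 hδd rfl
  have hloc : IsLocalMax (fun t => f (δ t)) 0 := by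
    filter_upwards [isOpen_Ioo.eventually_mem h0mem2] with t ht
    have hKt : δ t ∈ K := by
      have h1 : δ t ∈ closure K := (hδfr t ht).1
      rwa [hKcl.closure_eq] at h1
    calc f (δ t) ≤ f V₂ := hKle _ hKt
    _ = (fun t => f (δ t)) 0 := by simp only []; rw [hδ0]
  have hfw : f w = 0 := by
    have h1 := hloc.deriv_eq_zero
    rwa [hd.deriv] at h1
  have hV₂R : V₂ - R = α • D := by rw [hRdef, hD]; match_scalars <;> linarith
  have hfR : f R < f V₂ := hf R hRint
  have hfD : 0 < f D := by
    have h2 : f V₂ - f R = α * f D := by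
      rw [← map_sub, hV₂R, map_smul, smul_eq_mul]
    nlinarith
  have : f w = lam * f D := by rw [hlam, map_smul, smul_eq_mul]
  rw [hfw] at this
  have : lam = 0 := by
    rcases mul_eq_zero.1 this.symm with h | h
    · exact h
    · exact absurd h hfD.ne'
  exact hlamne this

end ChordalAux

open ChordalAux

/-- For an analytic solution of the interior `F`-chordal problem, the tangent line of
the boundary curve at the vertex `V₁` is perpendicular to the axis. -/
theorem tangent_at_vertex_perpendicular
    (V₁ P Q V₂ : Plane)
    (hne : V₁ ≠ P ∧ V₁ ≠ Q ∧ V₁ ≠ V₂ ∧ P ≠ Q ∧ P ≠ V₂ ∧ Q ≠ V₂)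
    (hcol : Collinear ℝ ({V₁, P, Q, V₂} : Set Plane))
    (hPseg : P ∈ openSegment ℝ V₁ Q) (hQseg : Q ∈ openSegment ℝ P V₂)
    (F : ℝ → ℝ → ℝ)
    (hsymm : ∀ a b : ℝ, 0 ≤ a → 0 ≤ b → F a b = F b a)
    (hsmooth : ContDiffOn ℝ (⊤ : ℕ∞) (fun p : ℝ × ℝ => F p.1 p.2) (Ici 0 ×ˢ Ici 0))
    (hb1 : Fb F (dist P V₁) (dist P V₂) ≠ 0)
    (hb2 : Fb F (dist Q V₁) (dist Q V₂) ≠ 0)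
    (ha1 : Fa F (dist P V₁) (dist P V₂) ≠ 0)
    (ha2 : Fa F (dist Q V₁) (dist Q V₂) ≠ 0)
    (hiv : ∀ n : ℕ,
      ((Fa F (dist Q V₁) (dist Q V₂) * Fb F (dist P V₁) (dist P V₂)) /
       (Fa F (dist P V₁) (dist P V₂) * Fb F (dist Q V₁) (dist Q V₂))) ^ n ≠
      (dist V₂ Q * dist V₁ P) / (dist V₂ P * dist V₁ Q))
    (K : Set Plane)
    (hK : IsAnalyticSolution F P Q V₁ V₂ K)
    (ε : ℝ) (hε : 0 < ε) (γ : ℝ → Plane)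
    (hγ : AnalyticOnNhd ℝ γ (Ioo (-ε) ε)) (hγ0 : γ 0 = V₁) (hγ' : deriv γ 0 ≠ 0)
    (hγim : ∃ U : Set Plane, IsOpen U ∧ V₁ ∈ U ∧ γ '' Ioo (-ε) ε = frontier K ∩ U) :
    (inner ℝ (deriv γ 0) (V₂ - V₁) : ℝ) = 0 := by
  obtain ⟨hcomp, hconv, hint, hPint, hQint, hchP, hchQ, hspan, hbdry⟩ := hK
  obtain ⟨hV₁P, hV₁Q, hV₁V₂, hPQ, hPV₂, hQV₂⟩ := hne
  -- V₁ and V₂ are on the frontier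
  have hfrsub : ({V₁, V₂} : Set Plane) ⊆ frontier K := by
    rw [← hspan]; exact inter_subset_right
  have hV₁fr : V₁ ∈ frontier K := hfrsub (by simp)
  have hV₂fr : V₂ ∈ frontier K := hfrsub (by simp)
  -- convex combination representations of P and Q
  obtain ⟨a, b, ha, hb, hab1, hP⟩ := hPseg
  obtain ⟨cq, dq, hc, hdq, hcd, hQ⟩ := hQseg
  have hbcq : 1 - b * cq > 0 := by nlinarith
  have h1 : (1 - b * cq) • P = a • V₁ + (b * dq) • V₂ := by
    rw [← hQ] at hP
    linear_combination (norm := module) -hP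
  set α : ℝ := (1 - b * cq)⁻¹ * a with hαdef
  set β : ℝ := (1 - b * cq)⁻¹ * (b * dq) with hβdef
  have hα : 0 < α := by positivity
  have hβ : 0 < β := by positivity
  have hαβ : α + β = 1 := by
    rw [hαdef, hβdef]
    field_simp
    linear_combination hab1 + b * hcd
  have hPrep : P = α • V₁ + β • V₂ := by
    rw [hαdef, hβdef, mul_smul, mul_smul, ← smul_add, ← h1, inv_smul_smul₀ hbcq.ne']
  set α' : ℝ := cq * α with hα'def
  set β' : ℝ := cq * β + dq with hβ'def
  have hα' : 0 < α' := by positivity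
  have hβ' : 0 < β' := by positivity
  have hα'β' : α' + β' = 1 := by
    rw [hα'def, hβ'def]
    linear_combination cq * hαβ + hcd
  have hQrep : Q = α' • V₁ + β' • V₂ := by
    rw [← hQ, hPrep, hα'def, hβ'def]
    module
  clear_value α β α' β'
  clear hαdef hβdef hα'def hβ'def
  -- geometry of the axis
  set D : Plane := V₂ - V₁ with hDdef
  have hDne : D ≠ 0 := sub_ne_zero.2 (Ne.symm hV₁V₂)
  have hnD : (0:ℝ) < ‖D‖ := norm_pos_iff.2 hDne
  have hdPV₁ : dist P V₁ = β * ‖D‖ := by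
    rw [dist_eq_norm]
    have h2 : P - V₁ = β • D := by
      rw [hPrep, hDdef]; match_scalars <;> linarith
    rw [h2, norm_smul, Real.norm_of_nonneg hβ.le]
  have hdPV₂ : dist P V₂ = α * ‖D‖ := by
    rw [dist_eq_norm]
    have h2 : P - V₂ = -(α • D) := by
      rw [hPrep, hDdef]; match_scalars <;> linarith
    rw [h2, norm_neg, norm_smul, Real.norm_of_nonneg hα.le]
  have hdQV₁ : dist Q V₁ = β' * ‖D‖ := by
    rw [dist_eq_norm]
    have h2 : Q - V₁ = β' • D := by
      rw [hQrep, hDdef]; match_scalars <;> linarith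
    rw [h2, norm_smul, Real.norm_of_nonneg hβ'.le]
  have hdQV₂ : dist Q V₂ = α' * ‖D‖ := by
    rw [dist_eq_norm]
    have h2 : Q - V₂ = -(α' • D) := by
      rw [hQrep, hDdef]; match_scalars <;> linarith
    rw [h2, norm_neg, norm_smul, Real.norm_of_nonneg hα'.le]
  -- differentiability of F at the two base points
  have hFderiv : ∀ x y : ℝ, 0 < x → 0 < y →
      HasFDerivAt (fun p : ℝ × ℝ => F p.1 p.2) (fderiv ℝ (fun p : ℝ × ℝ => F p.1 p.2) (x, y)) (x, y) ∧
      Fa F x y = fderiv ℝ (fun p : ℝ × ℝ => F p.1 p.2) (x, y) ((1:ℝ), (0:ℝ)) ∧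
      Fb F x y = fderiv ℝ (fun p : ℝ × ℝ => F p.1 p.2) (x, y) ((0:ℝ), (1:ℝ)) := by
    intro x y hx hy
    have hmem : (Ici (0:ℝ) ×ˢ Ici (0:ℝ)) ∈ nhds ((x, y) : ℝ × ℝ) := by
      have hsub : (Ioi (0:ℝ) ×ˢ Ioi (0:ℝ)) ⊆ Ici (0:ℝ) ×ˢ Ici (0:ℝ) :=
        prod_mono Ioi_subset_Ici_self Ioi_subset_Ici_self
      exact mem_nhds_iff.2 ⟨Ioi 0 ×ˢ Ioi 0, hsub, isOpen_Ioi.prod isOpen_Ioi, ⟨hx, hy⟩⟩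
    have hCA : ContDiffAt ℝ (⊤ : ℕ∞) (fun p : ℝ × ℝ => F p.1 p.2) (x, y) :=
      hsmooth.contDiffAt hmem
    have hdiff : DifferentiableAt ℝ (fun p : ℝ × ℝ => F p.1 p.2) (x, y) :=
      hCA.differentiableAt (by simp)
    have hFd := hdiff.hasFDerivAt
    refine ⟨hFd, ?_, ?_⟩
    · have hpair : HasDerivAt (fun t : ℝ => ((t, y) : ℝ × ℝ)) (((1:ℝ), (0:ℝ)) : ℝ × ℝ) x :=
        (hasDerivAt_id x).prodMk (hasDerivAt_const x y)
      have h2 : HasDerivAt (fun t : ℝ => F t y)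
          (fderiv ℝ (fun p : ℝ × ℝ => F p.1 p.2) (x, y) ((1:ℝ), (0:ℝ))) x :=
        hFd.comp_hasDerivAt_of_eq x hpair rfl
      simpa [Fa] using h2.deriv
    · have hpair : HasDerivAt (fun t : ℝ => ((x, t) : ℝ × ℝ)) (((0:ℝ), (1:ℝ)) : ℝ × ℝ) y :=
        (hasDerivAt_const y x).prodMk (hasDerivAt_id y)
      have h2 : HasDerivAt (fun t : ℝ => F x t)
          (fderiv ℝ (fun p : ℝ × ℝ => F p.1 p.2) (x, y) ((0:ℝ), (1:ℝ))) y :=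
        hFd.comp_hasDerivAt_of_eq y hpair rfl
      simpa [Fb] using h2.deriv
  have hdPV₁pos : 0 < dist P V₁ := dist_pos.2 (Ne.symm hV₁P)
  have hdPV₂pos : 0 < dist P V₂ := dist_pos.2 hPV₂
  have hdQV₁pos : 0 < dist Q V₁ := dist_pos.2 (Ne.symm hV₁Q)
  have hdQV₂pos : 0 < dist Q V₂ := dist_pos.2 hQV₂
  obtain ⟨hFP, hFaP, hFbP⟩ := hFderiv _ _ hdPV₁pos hdPV₂pos
  obtain ⟨hFQ, hFaQ, hFbQ⟩ := hFderiv _ _ hdQV₁pos hdQV₂pos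
  set L2P := fderiv ℝ (fun p : ℝ × ℝ => F p.1 p.2) (dist P V₁, dist P V₂) with hL2Pdef
  set L2Q := fderiv ℝ (fun p : ℝ × ℝ => F p.1 p.2) (dist Q V₁, dist Q V₂) with hL2Qdef
  -- local chart at V₂
  obtain ⟨ε₂, hε₂, δ, hδa, hδ0, hδ', U₂, hU₂open, hV₂U₂, hδim⟩ := hbdry V₂ hV₂fr
  have hδfr : ∀ t ∈ Ioo (-ε₂) ε₂, δ t ∈ frontier K := by
    intro t ht
    have h2 : δ t ∈ δ '' Ioo (-ε₂) ε₂ := mem_image_of_mem δ ht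
    rw [hδim] at h2
    exact h2.1
  obtain ⟨U, hUopen, hV₁U, hγim'⟩ := hγim
  have hγfr : ∀ t ∈ Ioo (-ε) ε, γ t ∈ frontier K := by
    intro t ht
    have h2 : γ t ∈ γ '' Ioo (-ε) ε := mem_image_of_mem γ ht
    rw [hγim'] at h2
    exact h2.1
  -- tangent at V₂ is not parallel to the axis
  have hω : om (V₂ - V₁) (deriv δ 0) ≠ 0 :=
    om_tangent_ne_zero K hcomp.isClosed hconv V₁ V₂ P α β hα hβ hαβ hPrep hV₁V₂
      hPint hV₂fr ε₂ hε₂ δ hδa hδ0 hδ' hδfr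
  -- rewrite the derivative points
  have hzP : ((‖V₁ - P‖, ‖V₂ - P‖) : ℝ × ℝ) = ((dist P V₁, dist P V₂) : ℝ × ℝ) := by
    rw [dist_eq_norm, dist_eq_norm, norm_sub_rev V₁ P, norm_sub_rev V₂ P]
  have hzQ : ((‖V₁ - Q‖, ‖V₂ - Q‖) : ℝ × ℝ) = ((dist Q V₁, dist Q V₂) : ℝ × ℝ) := by
    rw [dist_eq_norm, dist_eq_norm, norm_sub_rev V₁ Q, norm_sub_rev V₂ Q]
  have hFP' : HasFDerivAt (fun p : ℝ × ℝ => F p.1 p.2) L2P ((‖V₁ - P‖, ‖V₂ - P‖) : ℝ × ℝ) := by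
    rw [hzP]; exact hFP
  have hFQ' : HasFDerivAt (fun p : ℝ × ℝ => F p.1 p.2) L2Q ((‖V₁ - Q‖, ‖V₂ - Q‖) : ℝ × ℝ) := by
    rw [hzQ]; exact hFQ
  -- the two chord equations
  have eqP := chord_equation K V₁ V₂ P α β hα hβ hαβ hPrep hV₁V₂ hV₁fr hV₂fr F L2P hFP' hchP
    ε ε₂ hε hε₂ γ δ hγ hγ0 hγfr hδa hδ0 hδfr hω
  have eqQ := chord_equation K V₁ V₂ Q α' β' hα' hβ' hα'β' hQrep hV₁V₂ hV₁fr hV₂fr F L2Q hFQ' hchQ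
    ε ε₂ hε hε₂ γ δ hγ hγ0 hγfr hδa hδ0 hδfr hω
  -- final contradiction
  by_contra hx
  set u : Plane := deriv γ 0 with hudef
  set w : Plane := deriv δ 0 with hwdef
  set X : ℝ := (inner ℝ u (V₂ - V₁) : ℝ) with hXdef
  set W : ℝ := (inner ℝ w (V₂ - V₁) : ℝ) with hWdef
  set ωuD : ℝ := om u (V₂ - V₁) with hωuDdef
  set ωDw : ℝ := om (V₂ - V₁) w with hωDwdef
  set A1 : ℝ := L2P ((1:ℝ), (0:ℝ)) with hA1def
  set B1 : ℝ := L2P ((0:ℝ), (1:ℝ)) with hB1def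
  set A2 : ℝ := L2Q ((1:ℝ), (0:ℝ)) with hA2def
  set B2 : ℝ := L2Q ((0:ℝ), (1:ℝ)) with hB2def
  clear_value u w X W ωuD ωDw A1 B1 A2 B2
  have hA1ne : A1 ≠ 0 := hFaP ▸ ha1
  have hB1ne : B1 ≠ 0 := hFbP ▸ hb1
  have hA2ne : A2 ≠ 0 := hFaQ ▸ ha2
  have hB2ne : B2 ≠ 0 := hFbQ ▸ hb2
  have hXne : X ≠ 0 := hx
  -- eqP : β * ωDw * A1 * X = α * ωuD * W * B1
  have hprodne : ωDw * X * (ωuD * W) ≠ 0 := by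
    have hyne : ωuD * W ≠ 0 := by
      intro h
      have h2 : β * ωDw * A1 * X = 0 := by
        rw [eqP]
        linear_combination (α * B1) * h
      have h3 : β * ωDw * A1 * X ≠ 0 :=
        mul_ne_zero (mul_ne_zero (mul_ne_zero hβ.ne' hω) hA1ne) hXne
      exact h3 h2
    exact mul_ne_zero (mul_ne_zero hω hXne) hyne
  have h3 : (β * ωDw * A1 * X) * (α' * ωuD * W * B2)
      = (α * ωuD * W * B1) * (β' * ωDw * A2 * X) := by
    linear_combination (α' * ωuD * W * B2) * eqP - (α * ωuD * W * B1) * eqQ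
  have h4 : (ωDw * X * (ωuD * W)) * (β * A1 * α' * B2)
      = (ωDw * X * (ωuD * W)) * (α * B1 * β' * A2) := by
    linear_combination h3
  have h5 : β * A1 * α' * B2 = α * B1 * β' * A2 := mul_left_cancel₀ hprodne h4
  -- contradict hypothesis (iv) with n = 1
  apply hiv 1
  rw [pow_one, hFaP, hFaQ, hFbP, hFbQ]
  rw [dist_comm V₂ Q, dist_comm V₁ P, dist_comm V₂ P, dist_comm V₁ Q]
  rw [hdQV₂, hdPV₁, hdPV₂, hdQV₁]
  rw [div_eq_div_iff (mul_ne_zero hA1ne hB2ne)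
    (by positivity : α * ‖D‖ * (β' * ‖D‖) ≠ 0)]
  linear_combination (-‖D‖ ^ 2) * h5
end
end

section
/- First Fundamental Theorem of Riordan Matrices: let d, f be formal power series over ℝ and let h be a formal power series over ℝ with zero constant coefficient, and let f ∘ h denote the formal substitution of h into f. Then for every natural number n, the n-th coefficient of d·(f ∘ h) equals the finite sum Σ_{j=0}^{n} [t^n](d·h^j) · [t^j]f, where [t^i]g denotes the i-th coefficient of the power series g. Equivalently, multiplying the generalized Riordan matrix R(d,h) = ([t^i](d·h^j))_{i,j≥0} by the column vector of coefficients of f yields the column vector of coefficients of d·(f ∘ h). -/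
open PowerSeries

noncomputable section

/-- Formal composition (substitution) `f ∘ h` of formal power series: for `h` with zero
constant coefficient, the `n`-th coefficient of `f ∘ h` is
`Σ_{j=0}^{n} [t^j]f · [t^n](h^j)` (the terms with `j > n` vanish since
`[t^n](h^j) = 0` for `j > n`). -/
def PowerSeries.compSubst (f h : PowerSeries ℝ) : PowerSeries ℝ :=
  PowerSeries.mk fun n =>
    ∑ j ∈ Finset.range (n + 1), PowerSeries.coeff (R := ℝ) j f * PowerSeries.coeff (R := ℝ) n (h ^ j)

lemma coeff_pow_eq_zero' {h : PowerSeries ℝ} (hh : PowerSeries.constantCoeff (R := ℝ) h = 0)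
    {m j : ℕ} (hmj : m < j) : PowerSeries.coeff (R := ℝ) m (h ^ j) = 0 := by
  have : (PowerSeries.X : PowerSeries ℝ) ^ j ∣ h ^ j :=
    pow_dvd_pow_of_dvd (PowerSeries.X_dvd_iff.mpr hh) j
  exact PowerSeries.X_pow_dvd_iff.mp this m hmj

/-- First Fundamental Theorem of Riordan Matrices: the `n`-th coefficient of
`d·(f ∘ h)` is `Σ_{j=0}^{n} [t^n](d·h^j) · [t^j]f`, i.e. the generalized Riordan
matrix `R(d,h)` maps the coefficient vector of `f` to that of `d·(f ∘ h)`. -/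
theorem first_fundamental_theorem_of_riordan_matrices
    (d f h : PowerSeries ℝ) (hh : PowerSeries.constantCoeff (R := ℝ) h = 0) (n : ℕ) :
    PowerSeries.coeff (R := ℝ) n (d * f.compSubst h) =
      ∑ j ∈ Finset.range (n + 1),
        PowerSeries.coeff (R := ℝ) n (d * h ^ j) * PowerSeries.coeff (R := ℝ) j f := by
  rw [PowerSeries.coeff_mul]
  have key : ∀ p ∈ Finset.HasAntidiagonal.antidiagonal n,
      PowerSeries.coeff (R := ℝ) p.1 d * PowerSeries.coeff (R := ℝ) p.2 (f.compSubst h) =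
      ∑ j ∈ Finset.range (n + 1),
        PowerSeries.coeff (R := ℝ) p.1 d * PowerSeries.coeff (R := ℝ) p.2 (h ^ j) *
          PowerSeries.coeff (R := ℝ) j f := by
    intro p hp
    have hp2 : p.2 ≤ n := by
      rw [Finset.HasAntidiagonal.mem_antidiagonal] at hp; omega
    rw [PowerSeries.compSubst, PowerSeries.coeff_mk]
    rw [Finset.mul_sum]
    rw [← Finset.sum_range_add_sum_Ico _ (Nat.add_le_add_right hp2 1)]
    have hzero : ∑ j ∈ Finset.Ico (p.2 + 1) (n + 1),
        PowerSeries.coeff (R := ℝ) p.1 d * PowerSeries.coeff (R := ℝ) p.2 (h ^ j) *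
          PowerSeries.coeff (R := ℝ) j f = 0 := by
      apply Finset.sum_eq_zero
      intro j hj
      rw [Finset.mem_Ico] at hj
      rw [coeff_pow_eq_zero' hh (by omega), mul_zero, zero_mul]
    rw [hzero, add_zero]
    apply Finset.sum_congr rfl
    intro j _; ring
  rw [Finset.sum_congr rfl key, Finset.sum_comm]
  apply Finset.sum_congr rfl
  intro j _
  rw [PowerSeries.coeff_mul, Finset.sum_mul]
end
end

section
/- Riordan-matrix characterization of geometric continuity of order n at a vertex: let n ≥ 1 and let x_l, y_l, x_r, y_r : ℝ → ℝ be functions of class C^n with x_l(0) = x_r(0) and y_l(0) = y_r(0). Then the following are equivalent. (a) There exists a C^n function u : ℝ → ℝ with u(0) = 0 and u′(0) ≠ 0 such that for every i ≤ n the i-th derivative at 0 of x_l ∘ u equals the i-th derivative at 0 of x_r, and the i-th derivative at 0 of y_l ∘ u equals the i-th derivative at 0 of y_r. (b) There exist real numbers u₁, u₂, …, u_n with u₁ ≠ 0 such that, setting U(t) = u₁t + u₂t² + ⋯ + u_n tⁿ, for every i ≤ n one has Σ_{j=0}^{i} [t^i](U^j) · (x_l^{(j)}(0)/j!) = x_r^{(i)}(0)/i!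 and Σ_{j=0}^{i} [t^i](U^j) · (y_l^{(j)}(0)/j!) = y_r^{(i)}(0)/i!, i.e. the partial Riordan matrix R_n(1,U) maps the vector of Taylor coefficients of (x_l, y_l) at 0 to the vector of Taylor coefficients of (x_r, y_r) at 0. -/
noncomputable section

open Polynomial Filter Asymptotics Topology Finset

lemma polyCoeff_zero_of_littleO : ∀ (n : ℕ) (p : Polynomial ℝ),
    (fun x => p.eval x) =o[𝓝[≠] (0:ℝ)] (fun x => x ^ n) → ∀ i ≤ n, p.coeff i = 0 := by
  intro n
  induction n with
  | zero =>
    intro p h i hi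
    interval_cases i
    have h0 : Tendsto (fun x => p.eval x) (𝓝[≠] (0:ℝ)) (𝓝 0) := by
      have : (fun x => p.eval x) =o[𝓝[≠] (0:ℝ)] (fun _ => (1:ℝ)) := by simpa using h
      exact isLittleO_one_iff ℝ |>.mp this
    have h1 : Tendsto (fun x => p.eval x) (𝓝[≠] (0:ℝ)) (𝓝 (p.eval 0)) :=
      (p.continuous.tendsto 0).mono_left nhdsWithin_le_nhds
    have h2 := tendsto_nhds_unique h1 h0
    simpa [Polynomial.coeff_zero_eq_eval_zero] using h2
  | succ n ih =>
    intro p h i hi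
    have h0' : Tendsto (fun x : ℝ => x ^ (n+1)) (𝓝[≠] (0:ℝ)) (𝓝 0) := by
      apply Tendsto.mono_left _ nhdsWithin_le_nhds
      simpa using (continuous_pow (n+1)).tendsto (0:ℝ)
    have h0 : Tendsto (fun x => p.eval x) (𝓝[≠] (0:ℝ)) (𝓝 0) :=
      h.isBigO.trans_tendsto h0'
    have h1 : Tendsto (fun x => p.eval x) (𝓝[≠] (0:ℝ)) (𝓝 (p.eval 0)) :=
      (p.continuous.tendsto 0).mono_left nhdsWithin_le_nhds
    have hc0 : p.coeff 0 = 0 := by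
      have h2 := tendsto_nhds_unique h1 h0
      simpa [Polynomial.coeff_zero_eq_eval_zero] using h2
    have hX : p = X * p.divX := by
      conv_lhs => rw [← p.X_mul_divX_add]
      simp [hc0]
    have hdiv : (fun x => (p.divX).eval x) =o[𝓝[≠] (0:ℝ)] (fun x => x ^ n) := by
      rw [isLittleO_iff] at h ⊢
      intro c hc
      filter_upwards [h hc, self_mem_nhdsWithin] with x hx hx0
      rw [hX] at hx
      simp only [Polynomial.eval_mul, Polynomial.eval_X, Real.norm_eq_abs, pow_succ,
        abs_mul] at hx ⊢
      have hxpos : 0 < |x| := abs_pos.2 hx0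
      nlinarith [hx, hxpos, abs_nonneg (p.divX.eval x), abs_nonneg (x^n), hc]
    rcases i with _ | k
    · exact hc0
    · have hco : p.coeff (k+1) = (p.divX).coeff k := by
        conv_lhs => rw [hX]
        exact Polynomial.coeff_X_mul _ _
      rw [hco]
      exact ih _ hdiv _ (by omega)

noncomputable def taylorPoly (n : ℕ) (f : ℝ → ℝ) : Polynomial ℝ :=
  ∑ i ∈ Finset.range (n+1), Polynomial.C (iteratedDeriv i f 0 / (Nat.factorial i : ℝ)) * Polynomial.X ^ i

lemma taylorPoly_coeff_gt (n : ℕ) (f : ℝ → ℝ) (i : ℕ) (hi : n < i) :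
    (taylorPoly n f).coeff i = 0 := by
  unfold taylorPoly
  rw [Polynomial.finset_sum_coeff]
  apply Finset.sum_eq_zero
  intro j hj
  have : j ≠ i := by simp at hj; omega
  simp [Polynomial.coeff_C_mul, Polynomial.coeff_X_pow, Ne.symm this]

lemma taylorPoly_coeff (n : ℕ) (f : ℝ → ℝ) (i : ℕ) (hi : i ≤ n) :
    (taylorPoly n f).coeff i = iteratedDeriv i f 0 / (Nat.factorial i : ℝ) := by
  unfold taylorPoly
  rw [Polynomial.finset_sum_coeff]
  rw [Finset.sum_eq_single i]
  · simp
  · intro j hj hne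
    simp [Polynomial.coeff_C_mul, Polynomial.coeff_X_pow, Ne.symm hne]
  · intro hni
    exact absurd (Finset.mem_range.2 (by omega)) hni

lemma peano : ∀ (n : ℕ) (f : ℝ → ℝ), ContDiff ℝ n f →
    (fun x => f x - (taylorPoly n f).eval x) =o[𝓝 (0:ℝ)] (fun x => x ^ n) := by
  intro n
  induction n with
  | zero =>
    intro f hf
    have : (fun x => f x - (taylorPoly 0 f).eval x) =o[𝓝 (0:ℝ)] (fun _ => (1:ℝ)) := by
      rw [isLittleO_one_iff]
      have : Tendsto f (𝓝 0) (𝓝 (f 0)) := (hf.continuous.tendsto 0)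
      have h2 : Tendsto (fun x => f x - (taylorPoly 0 f).eval x) (𝓝 (0:ℝ))
          (𝓝 (f 0 - (taylorPoly 0 f).eval 0)) :=
        this.sub ((taylorPoly 0 f).continuous.tendsto 0)
      simpa [taylorPoly] using h2
    simpa using this
  | succ n ih =>
    intro f hf
    have hf2 : ContDiff ℝ ((n : WithTop ℕ∞)+1) f := by exact_mod_cast hf
    have hss := (contDiff_succ_iff_deriv).mp hf2
    have hf' : ContDiff ℝ n (deriv f) := hss.2.2
    have hdf : Differentiable ℝ f := hss.1
    set g := fun x => f x - (taylorPoly (n+1) f).eval x with hg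
    -- deriv g = deriv f - derivative of poly
    have hderiv : ∀ x, HasDerivAt g (deriv f x - ((taylorPoly (n+1) f).derivative).eval x) x := by
      intro x
      exact ((hdf x).hasDerivAt).sub (Polynomial.hasDerivAt _ x)
    -- the derivative polynomial is the taylor poly of deriv f up to degree n... as coeffs
    have hcoeff : ∀ i ≤ n, ((taylorPoly (n+1) f).derivative).coeff i
        = (taylorPoly n (deriv f)).coeff i := by
      intro i hi
      rw [Polynomial.coeff_derivative, taylorPoly_coeff _ _ _ (by omega),
        taylorPoly_coeff _ _ _ hi, iteratedDeriv_succ']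
      rw [Nat.factorial_succ]
      push_cast
      have h1 : (Nat.factorial i : ℝ) ≠ 0 := Nat.cast_ne_zero.2 (Nat.factorial_ne_zero i)
      field_simp
    -- derivative of (n+1)-taylor poly equals taylor poly of deriv f
    have hpoly : (taylorPoly (n+1) f).derivative = taylorPoly n (deriv f) := by
      ext i
      rcases le_or_gt i n with hi | hi
      · exact hcoeff i hi
      · rw [taylorPoly_coeff_gt _ _ _ hi, Polynomial.coeff_derivative,
          taylorPoly_coeff_gt _ _ _ (by omega)]
        simp
    have ihd := ih (deriv f) hf'
    have hg0 : g 0 = 0 := by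
      simp only [hg]
      have : (taylorPoly (n+1) f).eval 0 = (taylorPoly (n+1) f).coeff 0 := by
        rw [Polynomial.coeff_zero_eq_eval_zero]
      rw [this, taylorPoly_coeff _ _ _ (by omega)]
      simp
    rw [isLittleO_iff] at ihd ⊢
    intro c hc
    have hev := ihd hc
    rw [Metric.eventually_nhds_iff] at hev
    obtain ⟨δ, hδ, hball⟩ := hev
    rw [Metric.eventually_nhds_iff]
    refine ⟨δ, hδ, fun {x} hx => ?_⟩
    have hdiffg : ∀ t, DifferentiableAt ℝ g t := fun t => (hderiv t).differentiableAt
    have hderivg : ∀ t, deriv g t = deriv f t - (taylorPoly n (deriv f)).eval t := by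
      intro t
      rw [(hderiv t).deriv, hpoly]
    have hxabs : dist x (0:ℝ) = |x| := by simp [Real.dist_eq]
    have key : ‖g x - g 0‖ ≤ (c * |x|^n) * ‖x - 0‖ := by
      apply Convex.norm_image_sub_le_of_norm_deriv_le (s := Set.uIcc (0:ℝ) x)
        (fun t _ => hdiffg t) _ (convex_uIcc _ _) Set.left_mem_uIcc Set.right_mem_uIcc
      intro t ht
      have htx : |t| ≤ |x| := by
        rw [Set.uIcc_eq_union] at ht
        rcases ht with ht | ht <;> rcases ht with ⟨h1, h2⟩ <;>
          rw [abs_le] <;> constructor <;> simp at * <;> cases abs_cases x <;> linarith [abs_nonneg x]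
      have htδ : dist t (0:ℝ) < δ := by
        rw [Real.dist_eq, sub_zero]
        calc |t| ≤ |x| := htx
        _ < δ := by rw [hxabs] at hx; exact hx
      have := hball htδ
      rw [hderivg t]
      calc ‖deriv f t - (taylorPoly n (deriv f)).eval t‖ ≤ c * ‖t^n‖ := this
      _ ≤ c * |x|^n := by
          rw [Real.norm_eq_abs, abs_pow]
          exact mul_le_mul_of_nonneg_left (pow_le_pow_left₀ (abs_nonneg t) htx n) (le_of_lt hc)
    rw [hg0, sub_zero] at key
    calc ‖g x‖ ≤ (c * |x|^n) * ‖x - 0‖ := key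
    _ = c * ‖x^(n+1)‖ := by
        rw [sub_zero, Real.norm_eq_abs, Real.norm_eq_abs, abs_pow, pow_succ]
        ring

lemma taylor_coeff_of_littleO (n : ℕ) (g : ℝ → ℝ) (S : Polynomial ℝ)
    (hg : ContDiff ℝ n g)
    (h : (fun x => g x - S.eval x) =o[𝓝 (0:ℝ)] (fun x => x ^ n)) :
    ∀ i ≤ n, iteratedDeriv i g 0 / (Nat.factorial i : ℝ) = S.coeff i := by
  have hp := peano n g hg
  have hdiff : (fun x => ((taylorPoly n g) - S).eval x) =o[𝓝 (0:ℝ)] (fun x => x ^ n) := by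
    have := h.sub hp
    simpa [Polynomial.eval_sub, sub_sub_sub_cancel_left] using this
  have hdiff' : (fun x => ((taylorPoly n g) - S).eval x) =o[𝓝[≠] (0:ℝ)] (fun x => x ^ n) :=
    hdiff.mono nhdsWithin_le_nhds
  intro i hi
  have := polyCoeff_zero_of_littleO n _ hdiff' i hi
  rw [Polynomial.coeff_sub, sub_eq_zero] at this
  rw [← taylorPoly_coeff n g i hi, this]

lemma pow_coeff_eq_zero {p : Polynomial ℝ} (hp : p.coeff 0 = 0) {i j : ℕ} (hij : i < j) :
    (p ^ j).coeff i = 0 := by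
  obtain ⟨r, hr⟩ := (Polynomial.X_dvd_iff).2 hp
  have : p ^ j = r ^ j * Polynomial.X ^ j := by rw [hr]; ring
  rw [this, Polynomial.coeff_mul_X_pow', if_neg (by omega)]

lemma contDiff_polyEval (p : Polynomial ℝ) (m : WithTop ℕ∞) :
    ContDiff ℝ m (fun x => p.eval x) := by
  induction p using Polynomial.induction_on' with
  | add p q hp hq => simpa [Polynomial.eval_add] using hp.add hq
  | monomial k c =>
      simpa [Polynomial.eval_monomial] using (contDiff_const (c := c)).mul (contDiff_id.pow k)

lemma eval_sub_littleO (q : Polynomial ℝ) (a b w : ℝ → ℝ) {a₀ b₀ : ℝ}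
    (ha : Filter.Tendsto a (𝓝 (0:ℝ)) (𝓝 a₀)) (hb : Filter.Tendsto b (𝓝 (0:ℝ)) (𝓝 b₀))
    (hab : (fun x => a x - b x) =o[𝓝 (0:ℝ)] w) :
    (fun x => q.eval (a x) - q.eval (b x)) =o[𝓝 (0:ℝ)] w := by
  induction q using Polynomial.induction_on' with
  | add p q hp hq =>
      simp only [Polynomial.eval_add]
      have := hp.add hq
      simpa [add_sub_add_comm] using this
  | monomial m c =>
      simp only [Polynomial.eval_monomial]
      have hgeom : Filter.Tendsto (fun x => ∑ i ∈ Finset.range m, (a x)^i * (b x)^(m-1-i))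
          (𝓝 (0:ℝ)) (𝓝 (∑ i ∈ Finset.range m, a₀^i * b₀^(m-1-i))) := by
        apply tendsto_finset_sum
        intro i _
        exact (ha.pow i).mul (hb.pow (m-1-i))
      have hO : (fun x => ∑ i ∈ Finset.range m, (a x)^i * (b x)^(m-1-i))
          =O[𝓝 (0:ℝ)] (fun _ => (1:ℝ)) := hgeom.isBigO_one ℝ
      have h1 : (fun x => (a x - b x) * (∑ i ∈ Finset.range m, (a x)^i * (b x)^(m-1-i)))
          =o[𝓝 (0:ℝ)] (fun x => w x * 1) := hab.mul_isBigO hO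
      have h2 : (fun x => c * ((a x)^m - (b x)^m)) =o[𝓝 (0:ℝ)] (fun x => w x * 1) := by
        apply IsLittleO.const_mul_left
        apply h1.congr' _ (Filter.EventuallyEq.refl _ _)
        filter_upwards with x
        rw [mul_comm, geom_sum₂_mul]
      simpa [mul_sub] using h2

lemma key_lemma (n : ℕ) (hn : 1 ≤ n) (f u : ℝ → ℝ)
    (hf : ContDiff ℝ n f) (hu : ContDiff ℝ n u) (hu0 : u 0 = 0)
    (i : ℕ) (hi : i ≤ n) :
    iteratedDeriv i (f ∘ u) 0 / (Nat.factorial i : ℝ) =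
      ∑ j ∈ Finset.range (i + 1),
        ((taylorPoly n u) ^ j).coeff i * (iteratedDeriv j f 0 / (Nat.factorial j : ℝ)) := by
  set P := taylorPoly n u with hP
  set Q := taylorPoly n f with hQ
  have hutd : Filter.Tendsto u (𝓝 (0:ℝ)) (𝓝 (0:ℝ)) := by
    have := hu.continuous.tendsto 0
    rwa [hu0] at this
  have hudiff : DifferentiableAt ℝ u 0 :=
    (hu.differentiable (by exact_mod_cast (by omega : n ≠ 0))) 0
  have huO : (fun x => u x) =O[𝓝 (0:ℝ)] (fun x => x) := by
    have := hudiff.hasFDerivAt.isBigO_sub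
    simpa [hu0] using this
  have h1 : (fun x => f (u x) - Q.eval (u x)) =o[𝓝 (0:ℝ)] (fun x => x ^ n) := by
    have := (peano n f hf).comp_tendsto hutd
    exact this.trans_isBigO (huO.pow n)
  have hPtd : Filter.Tendsto (fun x => P.eval x) (𝓝 (0:ℝ)) (𝓝 (P.eval 0)) :=
    P.continuous.tendsto 0
  have h2 : (fun x => Q.eval (u x) - Q.eval (P.eval x)) =o[𝓝 (0:ℝ)] (fun x => x ^ n) :=
    eval_sub_littleO Q u (fun x => P.eval x) _ hutd hPtd (peano n u hu)
  have h3 : (fun x => (f ∘ u) x - (Q.comp P).eval x) =o[𝓝 (0:ℝ)] (fun x => x ^ n) := by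
    have := h1.add h2
    apply this.congr' _ (Filter.EventuallyEq.refl _ _)
    filter_upwards with x
    simp only [Polynomial.eval_comp, Function.comp_apply]
    ring
  have hcd : ContDiff ℝ n (f ∘ u) := hf.comp hu
  have hco := taylor_coeff_of_littleO n (f ∘ u) (Q.comp P) hcd h3 i hi
  rw [hco]
  -- now compute the coefficient of the composed polynomial
  have hQP : (Q.comp P) = ∑ j ∈ Finset.range (n+1),
      Polynomial.C (iteratedDeriv j f 0 / (Nat.factorial j : ℝ)) * P ^ j := by
    rw [hQ]
    unfold taylorPoly
    rw [Polynomial.sum_comp]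
    apply Finset.sum_congr rfl
    intro j _
    rw [Polynomial.mul_comp, Polynomial.C_comp, Polynomial.X_pow_comp]
  rw [hQP, Polynomial.finset_sum_coeff]
  have hPc0 : P.coeff 0 = 0 := by
    rw [hP, taylorPoly_coeff n u 0 (by omega)]
    simp [hu0]
  have hsub : Finset.range (i+1) ⊆ Finset.range (n+1) := Finset.range_subset_range.2 (by omega)
  refine Eq.trans (Finset.sum_subset hsub ?_).symm (Finset.sum_congr rfl ?_)
  · intro j hj hji
    simp only [Finset.mem_range] at hj hji
    rw [Polynomial.coeff_C_mul, pow_coeff_eq_zero hPc0 (by omega), mul_zero]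
  · intro j _
    rw [Polynomial.coeff_C_mul]
    ring

/-- Riordan-matrix characterization of geometric continuity of order `n` at a vertex:
the existence of a regular `C^n` reparametrization `u` matching the first `n`
derivatives of the two branches at `0` is equivalent to the existence of a partial
Riordan matrix `R_n(1, U)`, `U(t) = u₁t + ⋯ + u_n tⁿ` with `u₁ ≠ 0`, mapping the
Taylor coefficients of the left branch to those of the right branch. -/
theorem geometric_continuity_iff_riordan
    (n : ℕ) (hn : 1 ≤ n)
    (xl yl xr yr : ℝ → ℝ)
    (hxl : ContDiff ℝ n xl) (hyl : ContDiff ℝ n yl)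
    (hxr : ContDiff ℝ n xr) (hyr : ContDiff ℝ n yr)
    (hx0 : xl 0 = xr 0) (hy0 : yl 0 = yr 0) :
    (∃ u : ℝ → ℝ, ContDiff ℝ n u ∧ u 0 = 0 ∧ deriv u 0 ≠ 0 ∧
      ∀ i ≤ n, iteratedDeriv i (xl ∘ u) 0 = iteratedDeriv i xr 0 ∧
               iteratedDeriv i (yl ∘ u) 0 = iteratedDeriv i yr 0) ↔
    (∃ u : ℕ → ℝ, u 1 ≠ 0 ∧
      ∀ i ≤ n,
        (∑ j ∈ Finset.range (i + 1),
            ((∑ k ∈ Finset.Icc 1 n, Polynomial.C (u k) * Polynomial.X ^ k) ^ j).coeff i *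
              (iteratedDeriv j xl 0 / (Nat.factorial j : ℝ)) =
          iteratedDeriv i xr 0 / (Nat.factorial i : ℝ)) ∧
        (∑ j ∈ Finset.range (i + 1),
            ((∑ k ∈ Finset.Icc 1 n, Polynomial.C (u k) * Polynomial.X ^ k) ^ j).coeff i *
              (iteratedDeriv j yl 0 / (Nat.factorial j : ℝ)) =
          iteratedDeriv i yr 0 / (Nat.factorial i : ℝ))) := by
  constructor
  · rintro ⟨u, hu, hu0, hu1, hder⟩
    refine ⟨fun k => iteratedDeriv k u 0 / (Nat.factorial k : ℝ), ?_, ?_⟩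
    · simpa [iteratedDeriv_one] using hu1
    · intro i hi
      have hUP : (∑ k ∈ Finset.Icc 1 n,
          Polynomial.C (iteratedDeriv k u 0 / (Nat.factorial k : ℝ)) * Polynomial.X ^ k)
          = taylorPoly n u := by
        unfold taylorPoly
        refine Finset.sum_subset ?_ ?_
        · intro k hk
          simp only [Finset.mem_Icc, Finset.mem_range] at hk ⊢
          omega
        · intro k hk hk'
          simp only [Finset.mem_Icc, Finset.mem_range] at hk hk'
          have hk0 : k = 0 := by omega
          subst hk0
          simp [hu0]
      constructor
      · simp only [hUP]
        rw [← key_lemma n hn xl u hxl hu hu0 i hi, (hder i hi).1]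
      · simp only [hUP]
        rw [← key_lemma n hn yl u hyl hu hu0 i hi, (hder i hi).2]
  · rintro ⟨v, hv1, hcond⟩
    set U := ∑ k ∈ Finset.Icc 1 n, Polynomial.C (v k) * Polynomial.X ^ k with hU
    have hUc : ∀ k, U.coeff k = if k ∈ Finset.Icc 1 n then v k else 0 := by
      intro k
      rw [hU, Polynomial.finset_sum_coeff]
      simp only [Polynomial.coeff_C_mul, Polynomial.coeff_X_pow, mul_ite, mul_one, mul_zero]
      rw [Finset.sum_ite_eq (Finset.Icc 1 n) k v]
    set u := fun x => U.eval x with hu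
    have hcu : ContDiff ℝ n u := contDiff_polyEval U n
    have hu0 : u 0 = 0 := by
      show U.eval 0 = 0
      rw [← Polynomial.coeff_zero_eq_eval_zero, hUc]
      simp
    have hud : deriv u 0 = v 1 := by
      show deriv (fun x => U.eval x) 0 = v 1
      rw [Polynomial.deriv, ← Polynomial.coeff_zero_eq_eval_zero, Polynomial.coeff_derivative,
        hUc]
      simp [Finset.mem_Icc, hn]
    have hfaccast : ∀ i : ℕ, ((Nat.factorial i : ℝ)) ≠ 0 :=
      fun i => Nat.cast_ne_zero.2 (Nat.factorial_ne_zero i)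
    have hTay : taylorPoly n u = U := by
      have hz : (fun x => u x - U.eval x) =o[𝓝 (0:ℝ)] (fun x => x ^ n) := by
        simp only [hu, sub_self]

        exact isLittleO_zero _ _
      have hco := taylor_coeff_of_littleO n u U hcu hz
      ext k
      rcases le_or_gt k n with hk | hk
      · rw [taylorPoly_coeff n u k hk, hco k hk]
      · rw [taylorPoly_coeff_gt n u k hk, hUc, if_neg]
        simp only [Finset.mem_Icc]
        omega
    refine ⟨u, hcu, hu0, by rw [hud]; exact hv1, ?_⟩
    intro i hi
    constructor
    · have hkx := key_lemma n hn xl u hxl hcu hu0 i hi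
      rw [hTay] at hkx
      have hx := (hcond i hi).1
      have heq : iteratedDeriv i (xl ∘ u) 0 / (Nat.factorial i : ℝ)
          = iteratedDeriv i xr 0 / (Nat.factorial i : ℝ) := by rw [hkx]; exact hx
      have := congrArg (· * (Nat.factorial i : ℝ)) heq
      simpa [div_mul_cancel₀, hfaccast i] using this
    · have hkx := key_lemma n hn yl u hyl hcu hu0 i hi
      rw [hTay] at hkx
      have hy := (hcond i hi).2
      have heq : iteratedDeriv i (yl ∘ u) 0 / (Nat.factorial i : ℝ)
          = iteratedDeriv i yr 0 / (Nat.factorial i : ℝ) := by rw [hkx]; exact hy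
      have := congrArg (· * (Nat.factorial i : ℝ)) heq
      simpa [div_mul_cancel₀, hfaccast i] using this
end
end
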